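/- Let λ₁, λ₂, λ₃ be nonzero complex numbers, σ ∈ ℂ, A = [[σ, −2σ, 1],[0, −σ, 1],[0, 0, σ]] and B = diag(λ₁, λ₂, λ₃). Then A² = I and (AB)³ = I hold if and only if σ² = 1, λ₁³ = σ, λ₂³ = −σ, λ₃³ = σ, and either (λ₂/λ₁ = e(1/6) and λ₂/λ₃ = e(5/6)) or (λ₂/λ₁ = e(5/6) and λ₂/λ₃ = e(1/6)). Moreover, whenever these conditions hold, the pair (A, B) is indecomposable. -/

import Mathlib

noncomputable section
open Matrix

/-- `e(r) = exp(2πir)`. -/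
def ee (r : ℝ) : ℂ := Complex.exp (2 * Real.pi * Complex.I * r)

/-- A subspace `W` is invariant under the matrix `M` (acting by `mulVec`). -/
def Invariant {n : ℕ} (M : Matrix (Fin n) (Fin n) ℂ) (W : Submodule ℂ (Fin n → ℂ)) : Prop :=
  ∀ v ∈ W, M.mulVec v ∈ W

/-- The pair `(A, B)` is decomposable: `ℂⁿ` is the direct sum of two nonzero subspaces,
each invariant under both `A` and `B`. -/
def Decomposable {n : ℕ} (A B : Matrix (Fin n) (Fin n) ℂ) : Prop :=
  ∃ U V : Submodule ℂ (Fin n → ℂ), U ≠ ⊥ ∧ V ≠ ⊥ ∧ IsCompl U V ∧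
    Invariant A U ∧ Invariant B U ∧ Invariant A V ∧ Invariant B V

/-- The pair `(A, B)` is indecomposable. -/
def Indecomposable {n : ℕ} (A B : Matrix (Fin n) (Fin n) ℂ) : Prop :=
  ¬ Decomposable A B

/-- `(A, B)` and `(A', B')` are simultaneously conjugate:
`P A P⁻¹ = A'` and `P B P⁻¹ = B'` for a single invertible `P`. -/
def SimConj {n : ℕ} (A B A' B' : Matrix (Fin n) (Fin n) ℂ) : Prop :=
  ∃ P : Matrix (Fin n) (Fin n) ℂ, IsUnit P ∧ P * A = A' * P ∧ P * B = B' * P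

/-- `M` is diagonalizable over `ℂ`. -/
def IsDiagonalizable {n : ℕ} (M : Matrix (Fin n) (Fin n) ℂ) : Prop :=
  ∃ P : Matrix (Fin n) (Fin n) ℂ, IsUnit P ∧ ∃ d : Fin n → ℂ, P * M = Matrix.diagonal d * P



lemma ee16 : ee (1/6) = (1/2 : ℝ) + (Real.sqrt 3 / 2 : ℝ) * Complex.I := by
  have h : (2 * Real.pi * Complex.I * ((1/6 : ℝ) : ℂ)) = (Real.pi/3 : ℝ) * Complex.I := by
    push_cast; ring
  rw [ee, h, Complex.exp_mul_I, ← Complex.ofReal_cos, ← Complex.ofReal_sin,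
    Real.cos_pi_div_three, Real.sin_pi_div_three]

lemma ee56 : ee (5/6) = (1/2 : ℝ) - (Real.sqrt 3 / 2 : ℝ) * Complex.I := by
  have h : (2 * Real.pi * Complex.I * ((5/6 : ℝ) : ℂ)) = 2*Real.pi*Complex.I + ((-(Real.pi/3) : ℝ) : ℂ) * Complex.I := by
    push_cast; ring
  rw [ee, h, Complex.exp_add, Complex.exp_two_pi_mul_I, one_mul, Complex.exp_mul_I,
    ← Complex.ofReal_cos, ← Complex.ofReal_sin, Real.cos_neg, Real.sin_neg,
    Real.cos_pi_div_three, Real.sin_pi_div_three]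
  push_cast; ring

lemma sqrt3_sq : ((Real.sqrt 3 : ℝ) : ℂ)^2 = 3 := by
  rw [← Complex.ofReal_pow, Real.sq_sqrt (by norm_num)]; norm_num

lemma ee_quad16 : ee (1/6) ^ 2 - ee (1/6) + 1 = 0 := by
  rw [ee16]; push_cast
  linear_combination (-1/4 : ℂ) * sqrt3_sq + ((((Real.sqrt 3:ℝ)):ℂ)^2/4) * Complex.I_sq

lemma ee_quad56 : ee (5/6) ^ 2 - ee (5/6) + 1 = 0 := by
  rw [ee56]; push_cast
  linear_combination (-1/4 : ℂ) * sqrt3_sq + ((((Real.sqrt 3:ℝ)):ℂ)^2/4) * Complex.I_sq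

lemma ee_sum : ee (1/6) + ee (5/6) = 1 := by rw [ee16, ee56]; push_cast; ring

lemma ee_mul : ee (1/6) * ee (5/6) = 1 := by
  rw [ee16, ee56]; push_cast
  linear_combination (1/4 : ℂ) * sqrt3_sq - ((((Real.sqrt 3:ℝ)):ℂ)^2/4) * Complex.I_sq

lemma quad_iff (x : ℂ) : x^2 - x + 1 = 0 ↔ (x = ee (1/6) ∨ x = ee (5/6)) := by
  constructor
  · intro h
    have h2 : (x - ee (1/6)) * (x - ee (5/6)) = 0 := by
      linear_combination h - x * ee_sum + ee_mul
    rcases mul_eq_zero.1 h2 with h' | h'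
    · exact Or.inl (sub_eq_zero.1 h')
    · exact Or.inr (sub_eq_zero.1 h')
  · rintro (rfl | rfl); exacts [ee_quad16, ee_quad56]

lemma sqrt3_ne : ((Real.sqrt 3 : ℝ) : ℂ) ≠ 0 := by
  simp [Real.sqrt_eq_zero']

lemma ee_ne : ee (1/6) ≠ ee (5/6) := by
  rw [ee16, ee56]; intro h
  have : ((Real.sqrt 3 : ℝ) : ℂ) * Complex.I = 0 := by push_cast at h; linear_combination h
  rcases mul_eq_zero.1 this with h' | h'
  · exact sqrt3_ne h'
  · exact Complex.I_ne_zero h'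

lemma ee16_ne_one : ee (1/6) ≠ 1 := by
  intro h; have := ee_quad16; rw [h] at this; norm_num at this

lemma ee56_ne_one : ee (5/6) ≠ 1 := by
  intro h; have := ee_quad56; rw [h] at this; norm_num at this


lemma mem_coord (U V : Submodule ℂ (Fin 3 → ℂ)) (hUV : IsCompl U V)
    (l : Fin 3 → ℂ) (hinj : Function.Injective l)
    (hBU : Invariant (Matrix.diagonal l) U) (hBV : Invariant (Matrix.diagonal l) V) (i : Fin 3) :
    Pi.single i (1:ℂ) ∈ U ∨ Pi.single i (1:ℂ) ∈ V := by
  obtain ⟨u, v, huU, hvV, huv⟩ :=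
    Submodule.codisjoint_iff_exists_add_eq.mp hUV.codisjoint (Pi.single i 1)
  have hsum : (Matrix.diagonal l *ᵥ u - l i • u) + (Matrix.diagonal l *ᵥ v - l i • v) = 0 := by
    have h1 : Matrix.diagonal l *ᵥ (u + v) = l i • (u + v) := by
      rw [huv, Matrix.diagonal_mulVec_single]
      ext j
      rcases eq_or_ne j i with rfl | hj
      · simp
      · simp [Pi.single_eq_of_ne hj]
    rw [Matrix.mulVec_add, smul_add] at h1
    linear_combination (norm := abel) h1
  have hxU : Matrix.diagonal l *ᵥ u - l i • u ∈ U :=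
    U.sub_mem (hBU u huU) (U.smul_mem _ huU)
  have hyV : Matrix.diagonal l *ᵥ v - l i • v ∈ V :=
    V.sub_mem (hBV v hvV) (V.smul_mem _ hvV)
  have hx0 : Matrix.diagonal l *ᵥ u - l i • u = 0 := by
    have hxV : Matrix.diagonal l *ᵥ u - l i • u ∈ V := by
      have heq : Matrix.diagonal l *ᵥ u - l i • u = -(Matrix.diagonal l *ᵥ v - l i • v) := by
        linear_combination (norm := abel) hsum
      rw [heq]; exact V.neg_mem hyV
    exact Submodule.disjoint_def.1 hUV.disjoint _ hxU hxV
  have hu_supp : ∀ j, j ≠ i → u j = 0 := by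
    intro j hj
    have h := congrFun hx0 j
    simp only [Pi.sub_apply, Pi.smul_apply, Matrix.mulVec_diagonal, smul_eq_mul,
      Pi.zero_apply] at h
    have hne : l j - l i ≠ 0 := sub_ne_zero.2 (fun h' => hj (hinj h'))
    have h2 : (l j - l i) * u j = 0 := by linear_combination h
    exact (mul_eq_zero.1 h2).resolve_left hne
  have hu_eq : u = u i • (Pi.single i 1 : Fin 3 → ℂ) := by
    funext j
    rcases eq_or_ne j i with rfl | hj
    · simp
    · simp [Pi.single_eq_of_ne hj, hu_supp j hj]
  have hv_eq : v = v i • (Pi.single i 1 : Fin 3 → ℂ) := by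
    funext j
    rcases eq_or_ne j i with rfl | hj
    · simp
    · have h := congrFun huv j
      simp [Pi.single_eq_of_ne hj, hu_supp j hj] at h
      simp [Pi.single_eq_of_ne hj, h]
  rcases eq_or_ne (u i) 0 with h0 | h0
  · right
    have hvi : v i = 1 := by
      have h := congrFun huv i
      simpa [h0] using h
    rw [hv_eq, hvi, one_smul] at hvV
    exact hvV
  · left
    have huU' : (u i • (Pi.single i 1 : Fin 3 → ℂ)) ∈ U := hu_eq ▸ huU
    have h := U.smul_mem (u i)⁻¹ huU'
    rw [smul_smul, inv_mul_cancel₀ h0, one_smul] at h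
    exact h


lemma aux_e0 (σ : ℂ) (hσ0 : σ ≠ 0) (W : Submodule ℂ (Fin 3 → ℂ))
    (hAW : Invariant !![σ, -2*σ, 1; 0, -σ, 1; 0, 0, σ] W)
    (he1 : Pi.single 1 (1:ℂ) ∈ W) : Pi.single 0 (1:ℂ) ∈ W := by
  have h := hAW _ he1
  have h2 : !![σ, -2*σ, 1; 0, -σ, 1; 0, 0, σ] *ᵥ Pi.single 1 (1:ℂ) + σ • (Pi.single 1 1 : Fin 3 → ℂ)
      = (-2*σ) • (Pi.single 0 1 : Fin 3 → ℂ) := by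
    funext j
    fin_cases j <;> simp [Matrix.mulVec_single] <;> ring
  have hmem : (-2*σ) • (Pi.single 0 1 : Fin 3 → ℂ) ∈ W :=
    h2 ▸ W.add_mem h (W.smul_mem σ he1)
  have h3 := W.smul_mem (-2*σ)⁻¹ hmem
  rw [smul_smul, inv_mul_cancel₀ (by simpa using hσ0), one_smul] at h3
  exact h3

lemma aux_e01 (σ : ℂ) (W : Submodule ℂ (Fin 3 → ℂ))
    (hAW : Invariant !![σ, -2*σ, 1; 0, -σ, 1; 0, 0, σ] W)
    (he2 : Pi.single 2 (1:ℂ) ∈ W) :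
    Pi.single 0 (1:ℂ) + Pi.single 1 (1:ℂ) ∈ W := by
  have h := hAW _ he2
  have h2 : Pi.single 0 (1:ℂ) + Pi.single 1 (1:ℂ)
      = !![σ, -2*σ, 1; 0, -σ, 1; 0, 0, σ] *ᵥ Pi.single 2 (1:ℂ) - σ • (Pi.single 2 1 : Fin 3 → ℂ) := by
    funext j
    fin_cases j <;> simp [Matrix.mulVec_single] <;> ring
  rw [h2]
  exact W.sub_mem h (W.smul_mem σ he2)

lemma aux_top (W : Submodule ℂ (Fin 3 → ℂ))
    (h0 : Pi.single 0 (1:ℂ) ∈ W) (h1 : Pi.single 1 (1:ℂ) ∈ W) (h2 : Pi.single 2 (1:ℂ) ∈ W)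
    (x : Fin 3 → ℂ) : x ∈ W := by
  have hx : x = x 0 • (Pi.single 0 1 : Fin 3 → ℂ) + x 1 • (Pi.single 1 1 : Fin 3 → ℂ) + x 2 • (Pi.single 2 1 : Fin 3 → ℂ) := by
    funext j; fin_cases j <;> simp [Pi.single_apply]
  rw [hx]
  exact W.add_mem (W.add_mem (W.smul_mem _ h0) (W.smul_mem _ h1)) (W.smul_mem _ h2)

set_option maxHeartbeats 4000000 in
/-- with `A = [[σ,−2σ,1],[0,−σ,1],[0,0,σ]]`, `B = diag(λ₁,λ₂,λ₃)` (λᵢ ≠ 0),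
`A² = I ∧ (AB)³ = I` holds iff `σ² = 1`, `λ₁³ = σ`, `λ₂³ = −σ`, `λ₃³ = σ` and either
(`λ₂/λ₁ = e(1/6)` and `λ₂/λ₃ = e(5/6)`) or (`λ₂/λ₁ = e(5/6)` and `λ₂/λ₃ = e(1/6)`).
Moreover whenever these conditions hold the pair `(A, B)` is indecomposable. -/
theorem stmt_6 (l1 l2 l3 σ : ℂ) (hl1 : l1 ≠ 0) (hl2 : l2 ≠ 0) (hl3 : l3 ≠ 0)
    (A : Matrix (Fin 3) (Fin 3) ℂ) (hA : A = !![σ, -2*σ, 1; 0, -σ, 1; 0, 0, σ])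
    (B : Matrix (Fin 3) (Fin 3) ℂ) (hB : B = Matrix.diagonal ![l1, l2, l3]) :
    ((A ^ 2 = 1 ∧ (A * B) ^ 3 = 1) ↔
      (σ ^ 2 = 1 ∧ l1 ^ 3 = σ ∧ l2 ^ 3 = -σ ∧ l3 ^ 3 = σ ∧
        ((l2 / l1 = ee (1/6) ∧ l2 / l3 = ee (5/6)) ∨
          (l2 / l1 = ee (5/6) ∧ l2 / l3 = ee (1/6))))) ∧
      (A ^ 2 = 1 → (A * B) ^ 3 = 1 → Indecomposable A B) := by
  subst hA hB
  have hAB : (!![σ, -2*σ, 1; 0, -σ, 1; 0, 0, σ] * Matrix.diagonal ![l1, l2, l3]) =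
      !![σ*l1, -2*σ*l2, l3; 0, -σ*l2, l3; 0, 0, σ*l3] := by
    ext i j
    fin_cases i <;> fin_cases j <;>
      simp [Matrix.mul_apply, Fin.sum_univ_three, Matrix.diagonal, Matrix.vecHead,
        Matrix.vecTail]
  have hiff : ((!![σ, -2*σ, 1; 0, -σ, 1; 0, 0, σ] : Matrix (Fin 3) (Fin 3) ℂ) ^ 2 = 1 ∧
      (!![σ, -2*σ, 1; 0, -σ, 1; 0, 0, σ] * Matrix.diagonal ![l1, l2, l3]) ^ 3 = 1) ↔
      (σ ^ 2 = 1 ∧ l1 ^ 3 = σ ∧ l2 ^ 3 = -σ ∧ l3 ^ 3 = σ ∧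
        ((l2 / l1 = ee (1/6) ∧ l2 / l3 = ee (5/6)) ∨
          (l2 / l1 = ee (5/6) ∧ l2 / l3 = ee (1/6)))) := by
    constructor
    · rintro ⟨h1, h2⟩
      rw [pow_two, Matrix.mul_fin_three, Matrix.one_fin_three] at h1
      have hσ : σ ^ 2 = 1 := by
        have h := Matrix.ext_iff.2 h1 0 0; simp at h; linear_combination h
      have hσ0 : σ ≠ 0 := by intro h; rw [h] at hσ; norm_num at hσ
      rw [hAB, pow_succ, pow_two, Matrix.mul_fin_three, Matrix.mul_fin_three,
        Matrix.one_fin_three] at h2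
      have h00 := Matrix.ext_iff.2 h2 0 0
      have h01 := Matrix.ext_iff.2 h2 0 1
      have h02 := Matrix.ext_iff.2 h2 0 2
      have h11 := Matrix.ext_iff.2 h2 1 1
      have h12 := Matrix.ext_iff.2 h2 1 2
      have h22 := Matrix.ext_iff.2 h2 2 2
      simp at h00 h01 h02 h11 h12 h22
      have hc1 : l1 ^ 3 = σ := by linear_combination σ*h00 - (σ^2+1)*l1^3*hσ
      have hc2 : l2 ^ 3 = -σ := by linear_combination -σ*h11 - (σ^2+1)*l2^3*hσ
      have hc3 : l3 ^ 3 = σ := by linear_combination σ*h22 - (σ^2+1)*l3^3*hσ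
      have q1 : l1^2 - l1*l2 + l2^2 = 0 := by
        have key : (2*σ^3*l2) * (l1^2 - l1*l2 + l2^2) = 0 := by linear_combination -h01
        exact (mul_eq_zero.1 key).resolve_left
          (mul_ne_zero (mul_ne_zero two_ne_zero (pow_ne_zero 3 hσ0)) hl2)
      have q2 : l2^2 - l2*l3 + l3^2 = 0 := by
        have key : (σ^2*l3) * (l2^2 - l2*l3 + l3^2) = 0 := by linear_combination h12
        exact (mul_eq_zero.1 key).resolve_left (mul_ne_zero (pow_ne_zero 2 hσ0) hl3)
      have q3 : l1^2 + l1*l3 + l3^2 - 2*l2*(l1 - l2 + l3) = 0 := by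
        have key : (σ^2*l3) * (l1^2 + l1*l3 + l3^2 - 2*l2*(l1 - l2 + l3)) = 0 := by
          linear_combination h02
        exact (mul_eq_zero.1 key).resolve_left (mul_ne_zero (pow_ne_zero 2 hσ0) hl3)
      have hx : (l2/l1)^2 - (l2/l1) + 1 = 0 := by
        have e : (l2/l1)^2 - (l2/l1) + 1 = (l1^2 - l1*l2 + l2^2)/l1^2 := by
          field_simp; ring
        rw [e, q1, zero_div]
      have hy : (l2/l3)^2 - (l2/l3) + 1 = 0 := by
        have e : (l2/l3)^2 - (l2/l3) + 1 = (l3^2 - l2*l3 + l2^2)/l3^2 := by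
          field_simp; ring
        rw [e, show l3^2 - l2*l3 + l2^2 = 0 by linear_combination q2, zero_div]
      have hsame : l2/l1 = l2/l3 → False := by
        intro h
        rw [div_eq_div_iff hl1 hl3] at h
        have h13 : l1 = l3 := (mul_left_cancel₀ hl2 (by linear_combination h)).symm
        subst h13
        have e1 : l2*(l1+l2) = 0 := by linear_combination 3*q1 - q3
        have e2 : l1 + l2 = 0 := (mul_eq_zero.1 e1).resolve_left hl2
        have e3 : l2^2 = 0 := by linear_combination (1/3)*q1 - ((l1 - 2*l2)/3)*e2
        exact hl2 (pow_eq_zero_iff two_ne_zero |>.1 e3)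
      refine ⟨hσ, hc1, hc2, hc3, ?_⟩
      rcases (quad_iff _).1 hx with hx' | hx' <;> rcases (quad_iff _).1 hy with hy' | hy'
      · exact (hsame (hx'.trans hy'.symm)).elim
      · exact Or.inl ⟨hx', hy'⟩
      · exact Or.inr ⟨hx', hy'⟩
      · exact (hsame (hx'.trans hy'.symm)).elim
    · rintro ⟨hσ, hc1, hc2, hc3, hor⟩
      have key : (l1^2 - l1*l2 + l2^2 = 0) ∧ (l2^2 - l2*l3 + l3^2 = 0) ∧
          (l1*l3 - l1*l2 - l2*l3 = 0) := by
        rcases hor with ⟨hx, hy⟩ | ⟨hx, hy⟩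
        · have hl2a : l2 = ee (1/6) * l1 := (div_eq_iff hl1).1 hx
          have hl2b : l2 = ee (5/6) * l3 := (div_eq_iff hl3).1 hy
          have u1 : l1 = ee (5/6) * l2 := by linear_combination (-ee (5/6))*hl2a - l1*ee_mul
          have u2 : l3 = ee (1/6) * l2 := by linear_combination (-ee (1/6))*hl2b - l3*ee_mul
          refine ⟨?_, ?_, ?_⟩
          · linear_combination (l2 + ee (1/6)*l1 - l1)*hl2a + l1^2*ee_quad16
          · linear_combination (l2 + ee (5/6)*l3 - l3)*hl2b + l3^2*ee_quad56
          · linear_combination (l3 - l2)*u1 + (ee (5/6)*l2 - l2)*u2 + l2^2*ee_mul - l2^2*ee_sum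
        · have hl2a : l2 = ee (5/6) * l1 := (div_eq_iff hl1).1 hx
          have hl2b : l2 = ee (1/6) * l3 := (div_eq_iff hl3).1 hy
          have u1 : l1 = ee (1/6) * l2 := by linear_combination (-ee (1/6))*hl2a - l1*ee_mul
          have u2 : l3 = ee (5/6) * l2 := by linear_combination (-ee (5/6))*hl2b - l3*ee_mul
          refine ⟨?_, ?_, ?_⟩
          · linear_combination (l2 + ee (5/6)*l1 - l1)*hl2a + l1^2*ee_quad56
          · linear_combination (l2 + ee (1/6)*l3 - l3)*hl2b + l3^2*ee_quad16
          · linear_combination (l3 - l2)*u1 + (ee (1/6)*l2 - l2)*u2 + l2^2*ee_mul - l2^2*ee_sum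
      obtain ⟨q1, q2, q4⟩ := key
      constructor
      · rw [pow_two, Matrix.mul_fin_three, Matrix.one_fin_three]
        ext i j
        fin_cases i <;> fin_cases j <;> simp <;>
          first
            | linear_combination hσ
            | ring
      · rw [hAB, pow_succ, pow_two, Matrix.mul_fin_three, Matrix.mul_fin_three,
          Matrix.one_fin_three]
        ext i j
        fin_cases i <;> fin_cases j <;> simp <;>
          first
            | linear_combination σ^3*hc1 + (σ^2+1)*hσ
            | linear_combination -σ^3*hc2 + (σ^2+1)*hσ
            | linear_combination σ^3*hc3 + (σ^2+1)*hσ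
            | linear_combination (-2*σ^3*l2)*q1
            | linear_combination (σ^2*l3)*q2
            | linear_combination σ^2*l3*q1 + σ^2*l3*q2 + σ^2*l3*q4
            | ring
  refine ⟨hiff, ?_⟩
  intro h1 h2 hdec
  obtain ⟨hσ, hc1, hc2, hc3, hor⟩ := hiff.1 ⟨h1, h2⟩
  have hσ0 : σ ≠ 0 := by intro h; rw [h] at hσ; norm_num at hσ
  -- distinctness of l1 l2 l3
  have hne : l1 ≠ l2 ∧ l2 ≠ l3 ∧ l1 ≠ l3 := by
    rcases hor with ⟨hx, hy⟩ | ⟨hx, hy⟩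
    · have hl2a : l2 = ee (1/6) * l1 := (div_eq_iff hl1).1 hx
      have hl2b : l2 = ee (5/6) * l3 := (div_eq_iff hl3).1 hy
      refine ⟨?_, ?_, ?_⟩
      · intro h
        have h' : (ee (1/6) - 1) * l1 = 0 := by linear_combination -hl2a - h
        rcases mul_eq_zero.1 h' with h'' | h''
        · exact ee16_ne_one (sub_eq_zero.1 h'')
        · exact hl1 h''
      · intro h
        have h' : (ee (5/6) - 1) * l3 = 0 := by linear_combination -hl2b + h
        rcases mul_eq_zero.1 h' with h'' | h''
        · exact ee56_ne_one (sub_eq_zero.1 h'')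
        · exact hl3 h''
      · intro h
        have h' : (ee (1/6) - ee (5/6)) * l1 = 0 := by
          linear_combination -hl2a + hl2b - ee (5/6) * h
        rcases mul_eq_zero.1 h' with h'' | h''
        · exact ee_ne (sub_eq_zero.1 h'')
        · exact hl1 h''
    · have hl2a : l2 = ee (5/6) * l1 := (div_eq_iff hl1).1 hx
      have hl2b : l2 = ee (1/6) * l3 := (div_eq_iff hl3).1 hy
      refine ⟨?_, ?_, ?_⟩
      · intro h
        have h' : (ee (5/6) - 1) * l1 = 0 := by linear_combination -hl2a - h
        rcases mul_eq_zero.1 h' with h'' | h''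
        · exact ee56_ne_one (sub_eq_zero.1 h'')
        · exact hl1 h''
      · intro h
        have h' : (ee (1/6) - 1) * l3 = 0 := by linear_combination -hl2b + h
        rcases mul_eq_zero.1 h' with h'' | h''
        · exact ee16_ne_one (sub_eq_zero.1 h'')
        · exact hl3 h''
      · intro h
        have h' : (ee (5/6) - ee (1/6)) * l1 = 0 := by
          linear_combination -hl2a + hl2b - ee (1/6) * h
        rcases mul_eq_zero.1 h' with h'' | h''
        · exact ee_ne (sub_eq_zero.1 h'').symm
        · exact hl1 h''
  obtain ⟨h12, h23, h13⟩ := hne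
  have hinj : Function.Injective ![l1, l2, l3] := by
    intro i j hij
    fin_cases i <;> fin_cases j <;> simp at hij ⊢ <;>
      first
        | rfl
        | exact absurd hij h12
        | exact absurd hij h23
        | exact absurd hij h13
        | exact absurd hij.symm h12
        | exact absurd hij.symm h23
        | exact absurd hij.symm h13
  obtain ⟨U, V, hU, hV, hcompl, hAU, hBU, hAV, hBV⟩ := hdec
  have hd : ∀ x : Fin 3 → ℂ, x ∈ U → x ∈ V → x = 0 :=
    fun x hx hy => Submodule.disjoint_def.1 hcompl.disjoint x hx hy
  have hd' : ∀ x : Fin 3 → ℂ, x ∈ V → x ∈ U → x = 0 :=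
    fun x hx hy => hd x hy hx
  have hne01 : (Pi.single 0 (1:ℂ) + Pi.single 1 (1:ℂ) : Fin 3 → ℂ) ≠ 0 := by
    intro h
    have := congrFun h 0
    simp [Pi.single_apply] at this
  -- helper: if e0,e1,e2 all in W and W' disjoint-partner nonzero → False
  have hall : ∀ W W' : Submodule ℂ (Fin 3 → ℂ), (∀ x : Fin 3 → ℂ, x ∈ W → x ∈ W' → x = 0) →
      W' ≠ ⊥ → Pi.single 0 (1:ℂ) ∈ W → Pi.single 1 (1:ℂ) ∈ W → Pi.single 2 (1:ℂ) ∈ W → False := by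
    intro W W' hdisj hW' he0 he1 he2
    obtain ⟨x, hxW', hx0⟩ := Submodule.exists_mem_ne_zero_of_ne_bot hW'
    exact hx0 (hdisj x (aux_top W he0 he1 he2 x) hxW')
  rcases mem_coord U V hcompl ![l1,l2,l3] hinj hBU hBV 1 with he1U | he1V <;>
    rcases mem_coord U V hcompl ![l1,l2,l3] hinj hBU hBV 2 with he2U | he2V
  · exact hall U V hd hV (aux_e0 σ hσ0 U hAU he1U) he1U he2U
  · -- e1 ∈ U, e2 ∈ V
    have he0U := aux_e0 σ hσ0 U hAU he1U
    have h01V := aux_e01 σ V hAV he2V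
    have h01U : (Pi.single 0 (1:ℂ) + Pi.single 1 (1:ℂ) : Fin 3 → ℂ) ∈ U := U.add_mem he0U he1U
    exact hne01 (hd _ h01U h01V)
  · -- e1 ∈ V, e2 ∈ U
    have he0V := aux_e0 σ hσ0 V hAV he1V
    have h01U := aux_e01 σ U hAU he2U
    have h01V : (Pi.single 0 (1:ℂ) + Pi.single 1 (1:ℂ) : Fin 3 → ℂ) ∈ V := V.add_mem he0V he1V
    exact hne01 (hd _ h01U h01V)
  · exact hall V U hd' hU (aux_e0 σ hσ0 V hAV he1V) he1V he2V
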